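/- If R is a finite commutative local ring with maximal ideal m ≠ 0 and residue field F with |F| ≥ 4, then the longest induced path in the Jacobson graph of R has length 2, and the longest induced cycle has length 4. -/

import Mathlib

open scoped Classical

/-- The Jacobson graph of a commutative ring `R`. -/
def jacobsonGraph (R : Type*) [CommRing R] :
    SimpleGraph {x : R // x ∉ Ideal.jacobson (⊥ : Ideal R)} where
  Adj x y := x ≠ y ∧ ¬ IsUnit (1 - (x : R) * y)
  symm := by
    refine ⟨?_⟩
    rintro x y ⟨h1, h2⟩
    exact ⟨h1.symm, by rwa [mul_comm] at h2⟩
  loopless := ⟨fun x ⟨h, _⟩ => h rfl⟩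

/-- An induced (chordless) cycle in a simple graph. -/
def IsInducedCycle {V : Type*} {G : SimpleGraph V} {u : V} (p : G.Walk u u) : Prop :=
  p.IsCycle ∧ ∀ x ∈ p.support, ∀ y ∈ p.support, G.Adj x y → s(x, y) ∈ p.edges

/-- An induced (chordless) path in a simple graph. -/
def IsInducedPath {V : Type*} {G : SimpleGraph V} {u v : V} (p : G.Walk u v) : Prop :=
  p.IsPath ∧ ∀ x ∈ p.support, ∀ y ∈ p.support, G.Adj x y → s(x, y) ∈ p.edges

section Aux

variable {R : Type*} [CommRing R] [IsLocalRing R]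

open IsLocalRing SimpleGraph

lemma jacAux_jac_eq : Ideal.jacobson (⊥ : Ideal R) = maximalIdeal R :=
  jacobson_eq_maximalIdeal ⊥ bot_ne_top

lemma jacAux_adj_iff (x y : {x : R // x ∉ Ideal.jacobson (⊥ : Ideal R)}) :
    (jacobsonGraph R).Adj x y ↔
      x ≠ y ∧ residue R (x : R) * residue R (y : R) = 1 := by
  have : ¬ IsUnit (1 - (x : R) * y) ↔ residue R (x : R) * residue R (y : R) = 1 := by
    rw [← mem_nonunits_iff, ← mem_maximalIdeal, ← Ideal.Quotient.eq_zero_iff_mem]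
    show residue R _ = 0 ↔ _
    rw [map_sub, map_one, map_mul, sub_eq_zero, eq_comm]
  exact and_congr_right fun _ => this

lemma jacAux_path_le {u v : {x : R // x ∉ Ideal.jacobson (⊥ : Ideal R)}}
    (p : (jacobsonGraph R).Walk u v) (hp : IsInducedPath p) : p.length ≤ 2 := by
  by_contra hlen
  push_neg at hlen
  cases p with
  | nil => simp at hlen
  | cons h01 p =>
  rename_i x1
  cases p with
  | nil => simp at hlen
  | cons h12 p =>
  rename_i x2
  cases p with
  | nil => simp at hlen
  | cons h23 q =>
  rename_i x3
  obtain ⟨hpath, hind⟩ := hp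
  have hnodup := (SimpleGraph.Walk.isPath_def _).mp hpath
  simp only [SimpleGraph.Walk.support_cons, List.nodup_cons, List.mem_cons] at hnodup
  have h3q : x3 ∈ q.support := q.start_mem_support
  have h03 : u ≠ x3 := fun h => hnodup.1 (Or.inr (Or.inr (h ▸ h3q)))
  have h0q : (u : {x : R // x ∉ Ideal.jacobson (⊥ : Ideal R)}) ∉ q.support :=
    fun h => hnodup.1 (Or.inr (Or.inr h))
  have h01' : u ≠ x1 := fun h => hnodup.1 (Or.inl h)
  have h13 : x1 ≠ x3 := fun h => hnodup.2.1 (Or.inr (h ▸ h3q))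
  have h02 : u ≠ x2 := fun h => hnodup.1 (Or.inr (Or.inl h))
  -- residues
  have r01 := ((jacAux_adj_iff _ _).mp h01).2
  have r12 := ((jacAux_adj_iff _ _).mp h12).2
  have r23 := ((jacAux_adj_iff _ _).mp h23).2
  have r02 : residue R (u : R) = residue R (x2 : R) := by
    calc residue R (u : R) = residue R (u : R) * (residue R (x1 : R) * residue R (x2 : R)) := by
          rw [r12, mul_one]
      _ = (residue R (u : R) * residue R (x1 : R)) * residue R (x2 : R) := by ring
      _ = residue R (x2 : R) := by rw [r01, one_mul]
  have hadj : (jacobsonGraph R).Adj u x3 := (jacAux_adj_iff _ _).mpr ⟨h03, by rw [r02, r23]⟩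
  have hmem := hind u (by simp) x3 (by simp [h3q]) hadj
  simp only [SimpleGraph.Walk.edges_cons, List.mem_cons, Sym2.eq_iff] at hmem
  rcases hmem with (⟨h1, h2⟩ | ⟨h1, h2⟩) | (⟨h1, h2⟩ | ⟨h1, h2⟩) |
    (⟨h1, h2⟩ | ⟨h1, h2⟩) | hmem
  · exact h13 h2.symm
  · exact h01' h1
  · exact h01' h1
  · exact h02 h1
  · exact h02 h1
  · exact h03 h1
  · exact h0q (q.fst_mem_support_of_mem_edges hmem)

lemma jacAux_cycle_le {u : {x : R // x ∉ Ideal.jacobson (⊥ : Ideal R)}}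
    (p : (jacobsonGraph R).Walk u u) (hp : IsInducedCycle p) : p.length ≤ 4 := by
  by_contra hlen
  push_neg at hlen
  cases p with
  | nil => simp at hlen
  | cons h01 p =>
  rename_i x1
  cases p with
  | nil => simp at hlen
  | cons h12 p =>
  rename_i x2
  cases p with
  | nil => simp at hlen
  | cons h23 p =>
  rename_i x3
  cases p with
  | nil => simp at hlen
  | cons h34 p =>
  rename_i x4
  cases p with
  | nil => simp at hlen
  | cons h45 q =>
  rename_i x5
  obtain ⟨hcyc, hind⟩ := hp
  have hnodup := ((SimpleGraph.Walk.isCycle_def _).mp hcyc).2.2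
  simp only [SimpleGraph.Walk.support_cons, List.tail_cons, List.nodup_cons,
    List.mem_cons] at hnodup
  have h5q : x5 ∈ q.support := q.start_mem_support
  have h0q : (u : {x : R // x ∉ Ideal.jacobson (⊥ : Ideal R)}) ∈ q.support := q.end_mem_support
  have h1q : x1 ∉ q.support := fun h => hnodup.1 (Or.inr (Or.inr (Or.inr h)))
  have h12' : x1 ≠ x2 := fun h => hnodup.1 (Or.inl h)
  have h13 : x1 ≠ x3 := fun h => hnodup.1 (Or.inr (Or.inl h))
  have h14 : x1 ≠ x4 := fun h => hnodup.1 (Or.inr (Or.inr (Or.inl h)))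
  have h15 : x1 ≠ x5 := fun h => h1q (h ▸ h5q)
  have h10 : x1 ≠ u := fun h => h1q (h ▸ h0q)
  have h24 : x2 ≠ x4 := fun h => hnodup.2.1 (Or.inr (Or.inl h))
  have h40 : x4 ≠ u := fun h => hnodup.2.2.2.1 (h ▸ h0q)
  -- residues
  have r12 := ((jacAux_adj_iff _ _).mp h12).2
  have r23 := ((jacAux_adj_iff _ _).mp h23).2
  have r34 := ((jacAux_adj_iff _ _).mp h34).2
  have r13 : residue R (x1 : R) = residue R (x3 : R) := by
    calc residue R (x1 : R)
        = residue R (x1 : R) * (residue R (x2 : R) * residue R (x3 : R)) := by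
          rw [r23, mul_one]
      _ = (residue R (x1 : R) * residue R (x2 : R)) * residue R (x3 : R) := by ring
      _ = residue R (x3 : R) := by rw [r12, one_mul]
  have hadj : (jacobsonGraph R).Adj x1 x4 := (jacAux_adj_iff _ _).mpr ⟨h14, by rw [r13, r34]⟩
  have hmem := hind x1 (by simp) x4 (by simp) hadj
  simp only [SimpleGraph.Walk.edges_cons, List.mem_cons, Sym2.eq_iff] at hmem
  rcases hmem with (⟨h1, h2⟩ | ⟨h1, h2⟩) | (⟨h1, h2⟩ | ⟨h1, h2⟩) |
    (⟨h1, h2⟩ | ⟨h1, h2⟩) | (⟨h1, h2⟩ | ⟨h1, h2⟩) | (⟨h1, h2⟩ | ⟨h1, h2⟩) | hmem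
  · exact h10 h1
  · exact h40 h2
  · exact h24 h2.symm
  · exact h12' h1
  · exact h12' h1
  · exact h13 h1
  · exact h13 h1
  · exact h14 h1
  · exact h14 h1
  · exact h15 h1
  · exact h1q (q.fst_mem_support_of_mem_edges hmem)

end Aux

set_option maxHeartbeats 2000000 in
/-- For a finite commutative local ring R with maximal ideal m ≠ 0 and
residue field F with |F| ≥ 4, the longest induced path in the Jacobson graph has length 2
and the longest induced cycle has length 4. -/
theorem jacobsonGraph_localRing_longest_induced
    (R : Type*) [CommRing R] [Finite R] [IsLocalRing R]
    (hm : IsLocalRing.maximalIdeal R ≠ ⊥)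
    (hF : 4 ≤ Nat.card (IsLocalRing.ResidueField R)) :
    (∃ (u v : {x : R // x ∉ Ideal.jacobson (⊥ : Ideal R)})
      (p : (jacobsonGraph R).Walk u v), IsInducedPath p ∧ p.length = 2) ∧
    (∀ (u v : {x : R // x ∉ Ideal.jacobson (⊥ : Ideal R)})
      (p : (jacobsonGraph R).Walk u v), IsInducedPath p → p.length ≤ 2) ∧
    (∃ (u : {x : R // x ∉ Ideal.jacobson (⊥ : Ideal R)})
      (p : (jacobsonGraph R).Walk u u), IsInducedCycle p ∧ p.length = 4) ∧
    (∀ (u : {x : R // x ∉ Ideal.jacobson (⊥ : Ideal R)})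
      (p : (jacobsonGraph R).Walk u u), IsInducedCycle p → p.length ≤ 4) := by
  classical
  open IsLocalRing SimpleGraph in
  -- Set-up: find a suitable element of the residue field
  letI : Fintype (ResidueField R) := @Fintype.ofFinite _ (Quotient.finite _)
  obtain ⟨α, hα⟩ : ∃ α : ResidueField R, α ∉ ({0, 1, -1} : Finset (ResidueField R)) := by
    by_contra h
    push_neg at h
    have hle : Finset.univ.card ≤ ({0, 1, -1} : Finset (ResidueField R)).card :=
      Finset.card_le_card_of_injOn id (fun x _ => by simpa using h x) (fun x _ y _ hxy => hxy)
    rw [Finset.card_univ] at hle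
    have c1 := Finset.card_insert_le (0 : ResidueField R) {1, -1}
    have c2 := Finset.card_insert_le (1 : ResidueField R) {-1}
    have c3 : ({-1} : Finset (ResidueField R)).card = 1 := Finset.card_singleton _
    rw [Nat.card_eq_fintype_card] at hF
    omega
  simp only [Finset.mem_insert, Finset.mem_singleton, not_or] at hα
  obtain ⟨hα0, hα1, hαm1⟩ := hα
  have hαα : α * α ≠ 1 := by
    intro hsq
    have h20 : (α - 1) * (α + 1) = 0 := by linear_combination hsq
    rcases mul_eq_zero.mp h20 with h' | h'
    · exact hα1 (sub_eq_zero.mp h')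
    · exact hαm1 (eq_neg_of_add_eq_zero_left h')
  set β := α⁻¹ with hβdef
  have hαβ : α * β = 1 := mul_inv_cancel₀ hα0
  have hβ0 : β ≠ 0 := inv_ne_zero hα0
  have hαβne : α ≠ β := fun h => hαα (h ▸ hαβ)
  have hββ : β * β ≠ 1 := by
    intro h
    apply hαα
    have hab : α = β := by
      calc α = α * (β * β) := by rw [h, mul_one]
        _ = (α * β) * β := by ring
        _ = β := by rw [hαβ, one_mul]
    rw [hab]; exact h
  -- lift to R
  obtain ⟨a, ha⟩ := IsLocalRing.residue_surjective (R := R) α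
  obtain ⟨b, hb⟩ := IsLocalRing.residue_surjective (R := R) β
  obtain ⟨t, htm, ht0⟩ := (Submodule.ne_bot_iff _).mp hm
  have hrt : residue R t = 0 := Ideal.Quotient.eq_zero_iff_mem.mpr htm
  have hat : residue R (a + t) = α := by rw [map_add, ha, hrt, add_zero]
  have hbt : residue R (b + t) = β := by rw [map_add, hb, hrt, add_zero]
  -- the four vertices
  have mkmem : ∀ x : R, residue R x ≠ 0 → x ∉ Ideal.jacobson (⊥ : Ideal R) := by
    intro x hx hmem
    rw [jacAux_jac_eq] at hmem
    exact hx (Ideal.Quotient.eq_zero_iff_mem.mpr hmem)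
  set va : {x : R // x ∉ Ideal.jacobson (⊥ : Ideal R)} :=
    ⟨a, mkmem a (ha ▸ hα0)⟩ with hva
  set vb : {x : R // x ∉ Ideal.jacobson (⊥ : Ideal R)} :=
    ⟨b, mkmem b (hb ▸ hβ0)⟩ with hvb
  set va' : {x : R // x ∉ Ideal.jacobson (⊥ : Ideal R)} :=
    ⟨a + t, mkmem _ (hat ▸ hα0)⟩ with hva'
  set vb' : {x : R // x ∉ Ideal.jacobson (⊥ : Ideal R)} :=
    ⟨b + t, mkmem _ (hbt ▸ hβ0)⟩ with hvb'
  -- distinctness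
  have neab : va ≠ vb := by
    rw [hva, hvb, Ne, Subtype.mk.injEq]
    intro h
    exact hαβne (by rw [← ha, ← hb, h])
  have neab' : va ≠ vb' := by
    rw [hva, hvb', Ne, Subtype.mk.injEq]
    intro h
    exact hαβne (by rw [← ha, ← hbt, h])
  have nea'b : va' ≠ vb := by
    rw [hva', hvb, Ne, Subtype.mk.injEq]
    intro h
    exact hαβne (by rw [← hat, ← hb, h])
  have nea'b' : va' ≠ vb' := by
    rw [hva', hvb', Ne, Subtype.mk.injEq]
    intro h
    exact hαβne (by rw [← hat, ← hbt, h])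
  have neaa' : va ≠ va' := by
    rw [hva, hva', Ne, Subtype.mk.injEq]
    intro h
    exact ht0 (left_eq_add.mp h)
  have nebb' : vb ≠ vb' := by
    rw [hvb, hvb', Ne, Subtype.mk.injEq]
    intro h
    exact ht0 (left_eq_add.mp h)
  -- adjacency facts
  have adj_ab : (jacobsonGraph R).Adj va vb := by
    rw [jacAux_adj_iff]
    refine ⟨neab, ?_⟩
    show residue R a * residue R b = 1
    rw [ha, hb]; exact hαβ
  have adj_ba' : (jacobsonGraph R).Adj vb va' := by
    rw [jacAux_adj_iff]
    refine ⟨nea'b.symm, ?_⟩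
    show residue R b * residue R (a + t) = 1
    rw [hb, hat, mul_comm]; exact hαβ
  have adj_a'b' : (jacobsonGraph R).Adj va' vb' := by
    rw [jacAux_adj_iff]
    refine ⟨nea'b', ?_⟩
    show residue R (a + t) * residue R (b + t) = 1
    rw [hat, hbt]; exact hαβ
  have adj_b'a : (jacobsonGraph R).Adj vb' va := by
    rw [jacAux_adj_iff]
    refine ⟨neab'.symm, ?_⟩
    show residue R (b + t) * residue R a = 1
    rw [hbt, ha, mul_comm]; exact hαβ
  have adj_a'b : (jacobsonGraph R).Adj va' vb := by
    rw [jacAux_adj_iff]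
    refine ⟨nea'b, ?_⟩
    show residue R (a + t) * residue R b = 1
    rw [hat, hb]; exact hαβ
  have adj_ba : (jacobsonGraph R).Adj vb va := by
    rw [jacAux_adj_iff]
    refine ⟨neab.symm, ?_⟩
    show residue R b * residue R a = 1
    rw [hb, ha, mul_comm]; exact hαβ
  -- non-adjacency facts
  have nadj_aa' : ¬ (jacobsonGraph R).Adj va va' := by
    rw [jacAux_adj_iff]
    rintro ⟨-, h2⟩
    apply hαα
    calc α * α = residue R a * residue R (a + t) := by rw [ha, hat]
      _ = 1 := h2
  have nadj_a'a : ¬ (jacobsonGraph R).Adj va' va := fun h => nadj_aa' h.symm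
  have nadj_bb' : ¬ (jacobsonGraph R).Adj vb vb' := by
    rw [jacAux_adj_iff]
    rintro ⟨-, h2⟩
    apply hββ
    calc β * β = residue R b * residue R (b + t) := by rw [hb, hbt]
      _ = 1 := h2
  have nadj_b'b : ¬ (jacobsonGraph R).Adj vb' vb := fun h => nadj_bb' h.symm
  refine ⟨?_, fun u v p hp => jacAux_path_le p hp, ?_, fun u p hp => jacAux_cycle_le p hp⟩
  · -- induced path of length 2: va' - vb - va
    refine ⟨va', va, .cons adj_a'b (.cons adj_ba .nil), ⟨?_, ?_⟩, rfl⟩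
    · rw [SimpleGraph.Walk.isPath_def]
      simp [nea'b, nea'b.symm, neab, neab.symm, neaa', neaa'.symm]
    · intro x hx y hy hadj
      simp only [SimpleGraph.Walk.support_cons, SimpleGraph.Walk.support_nil,
        List.mem_cons, List.mem_singleton, List.not_mem_nil, or_false] at hx hy
      simp only [SimpleGraph.Walk.edges_cons, SimpleGraph.Walk.edges_nil,
        List.mem_cons, List.not_mem_nil, or_false, Sym2.eq_iff]
      rcases hx with rfl | rfl | rfl <;> rcases hy with rfl | rfl | rfl <;>
        first
        | exact absurd rfl hadj.ne
        | exact absurd hadj nadj_a'a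
        | exact absurd hadj nadj_aa'
        | simp
  · -- induced cycle of length 4: va - vb - va' - vb' - va
    refine ⟨va, .cons adj_ab (.cons adj_ba' (.cons adj_a'b' (.cons adj_b'a .nil))),
      ⟨?_, ?_⟩, rfl⟩
    · rw [SimpleGraph.Walk.isCycle_def]
      refine ⟨⟨?_⟩, by simp, ?_⟩
      · simp [Sym2.eq_iff, neab, neab.symm, neab', neab'.symm, nea'b, nea'b.symm,
          nea'b', nea'b'.symm, neaa', neaa'.symm, nebb', nebb'.symm]
      · simp [nea'b.symm, nebb', neab.symm, nea'b', neaa'.symm, neab'.symm,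
          nea'b'.symm, nebb'.symm, neab', nea'b]
    · intro x hx y hy hadj
      simp only [SimpleGraph.Walk.support_cons, SimpleGraph.Walk.support_nil,
        List.mem_cons, List.mem_singleton, List.not_mem_nil, or_false] at hx hy
      simp only [SimpleGraph.Walk.edges_cons, SimpleGraph.Walk.edges_nil,
        List.mem_cons, List.not_mem_nil, or_false, Sym2.eq_iff]
      rcases hx with rfl | rfl | rfl | rfl | rfl <;> rcases hy with rfl | rfl | rfl | rfl | rfl <;>
        first
        | exact absurd rfl hadj.ne
        | exact absurd hadj nadj_aa'
        | exact absurd hadj nadj_a'a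
        | exact absurd hadj nadj_bb'
        | exact absurd hadj nadj_b'b
        | simp
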